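/- (Noiseless correctness of the combined noise-mitigation encryption/decryption, Algorithms 2 and 3.) Let φ > 0 and λ > 0 be real numbers and define x mod n = x - n·⌊x/n⌋ for n = φ + 2λ. Let m and k be real numbers with 0 ≤ m ≤ φ and 0 ≤ k < φ + 2λ. Define the encrypted value c = ((m + λ + k) mod (φ + 2λ)) + λ, and define decryption of a received value r by: r₁ = min r (φ + 3λ), r₂ = max (r₁ - λ) 0, output ((r₂ - k) mod (φ + 2λ)) - λ. Then decrypting c (i.e., with no channel noise) returns exactly m. -/

import Mathlib

/-- The real-valued modulo operation: `rmod x n = x - n * ⌊x / n⌋`. -/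
noncomputable def rmod (x n : ℝ) : ℝ := x - n * ⌊x / n⌋

/-- The combined-method encryption of a magnitude `m` with key `k`
(Algorithm 2): add the energy buffer `lam`, add the key, reduce modulo
`φ + 2·lam`, and add the carrier energy `lam`. -/
noncomputable def vpscEncCombined (φ lam m k : ℝ) : ℝ :=
  rmod (m + lam + k) (φ + 2 * lam) + lam

/-- The combined-method decryption of a received value `r` with key `k`
(Algorithm 3): clamp impossible magnitudes above `φ + 3·lam`, remove the carrier
energy `lam` clamping below at `0`, subtract the key modulo `φ + 2·lam`, and
remove the energy buffer `lam`. -/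
noncomputable def vpscDecCombined (φ lam r k : ℝ) : ℝ :=
  rmod (max (min r (φ + 3 * lam) - lam) 0 - k) (φ + 2 * lam) - lam

lemma rmod_nonneg {n : ℝ} (hn : 0 < n) (x : ℝ) : 0 ≤ rmod x n := by
  have h : (⌊x / n⌋ : ℝ) * n ≤ x := by
    rw [← le_div_iff₀ hn]; exact Int.floor_le _
  unfold rmod; linarith

lemma rmod_lt {n : ℝ} (hn : 0 < n) (x : ℝ) : rmod x n < n := by
  have h : x < ((⌊x / n⌋ : ℝ) + 1) * n := by
    rw [← div_lt_iff₀ hn]; exact Int.lt_floor_add_one _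
  unfold rmod; linarith

lemma rmod_eq_self {n : ℝ} (hn : 0 < n) {x : ℝ} (h0 : 0 ≤ x) (h1 : x < n) :
    rmod x n = x := by
  have : ⌊x / n⌋ = 0 := by
    rw [Int.floor_eq_zero_iff]
    constructor
    · positivity
    · rw [div_lt_one hn] at *; exact h1
  simp [rmod, this]

lemma rmod_sub_rmod {n : ℝ} (hn : 0 < n) (x k : ℝ) :
    rmod (rmod x n - k) n = rmod (x - k) n := by
  unfold rmod
  have hne : n ≠ 0 := hn.ne'
  have : (x - n * ⌊x / n⌋ - k) / n = (x - k) / n - ⌊x / n⌋ := by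
    field_simp; ring
  rw [this, Int.floor_sub_intCast]
  push_cast
  ring

/-- **Noiseless correctness of the combined noise-mitigation method
(Algorithms 2 and 3).** For `m ∈ [0, φ]` and `k ∈ [0, φ + 2λ)`, decrypting the
encrypted value with no channel noise returns exactly `m`. -/
theorem vpsc_combined_noiseless_correctness (φ lam : ℝ) (hφ : 0 < φ)
    (hlam : 0 < lam) (m k : ℝ) (hm0 : 0 ≤ m) (hmφ : m ≤ φ)
    (hk0 : 0 ≤ k) (hkφ : k < φ + 2 * lam) :
    vpscDecCombined φ lam (vpscEncCombined φ lam m k) k = m := by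
  set n := φ + 2 * lam with hn
  have hnpos : 0 < n := by positivity
  have h0 : 0 ≤ rmod (m + lam + k) n := rmod_nonneg hnpos _
  have h1 : rmod (m + lam + k) n < n := rmod_lt hnpos _
  have hmin : min (rmod (m + lam + k) n + lam) (φ + 3 * lam) =
      rmod (m + lam + k) n + lam := min_eq_left (by simp only [hn] at h1 ⊢; linarith)
  have hmax : max (rmod (m + lam + k) n + lam - lam) 0 = rmod (m + lam + k) n := by
    rw [add_sub_cancel_right]; exact max_eq_left h0
  rw [vpscDecCombined, vpscEncCombined, hmin, hmax, rmod_sub_rmod hnpos,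
    show m + lam + k - k = m + lam by ring, rmod_eq_self hnpos (by linarith)
      (by simp only [hn]; linarith)]
  ring
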